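/- For all natural numbers n and m with 1 ≤ m ≤ n, m·c(n, n−m) = ∑_{k=0}^{m−1} C(n−k, m+1−k)·c(n, n−k), where C(a,b) denotes the binomial coefficient (equal to 0 when b > a). -/

import Mathlib

set_option linter.unusedSectionVars false

section Aux
open Equiv Equiv.Perm Finset

variable {β : Type*} [Fintype β] [DecidableEq β]

noncomputable def cyc (σ : Perm β) : ℕ :=
  Multiset.card σ.cycleType + Nat.card {x : β // σ x = x}

lemma fix_card_eq (σ : Perm β) :
    Nat.card {x : β // σ x = x} = Fintype.card β - σ.cycleType.sum := by
  have h : Nat.card {x : β // σ x = x} = Fintype.card (Function.fixedPoints σ) := by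
    rw [Nat.card_eq_fintype_card]
    exact Fintype.card_congr (Equiv.subtypeEquivRight (by
      intro x
      simp [Function.mem_fixedPoints, Function.IsFixedPt]))
  rw [h, card_fixedPoints]

lemma cyc_sum_le (σ : Perm β) : σ.cycleType.sum ≤ Fintype.card β := by
  rw [sum_cycleType]; exact Finset.card_le_univ _

lemma cyc_eq (σ : Perm β) :
    cyc σ = Multiset.card σ.cycleType + (Fintype.card β - σ.cycleType.sum) := by
  rw [cyc, fix_card_eq]

/-- Key removal lemma. -/
lemma cyc_swap_mul (σ : Perm β) (x : β) (h : σ x ≠ x) :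
    cyc (swap x (σ x) * σ) = cyc σ + 1 := by
  set c := σ.cycleOf x with hc_def
  have hmem : c ∈ σ.cycleFactorsFinset :=
    cycleOf_mem_cycleFactorsFinset_iff.mpr (mem_support.mpr h)
  have hcyc : c.IsCycle := isCycle_cycleOf σ h
  have hcx : c x = σ x := cycleOf_apply_self σ x
  have hcsx : c (σ x) = σ (σ x) :=
    SameCycle.cycleOf_apply (sameCycle_apply_right.mpr (SameCycle.refl σ x))
  set rest := σ * c⁻¹ with hrest_def
  have hdisj : Perm.Disjoint rest c := disjoint_mul_inv_of_mem_cycleFactorsFinset hmem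
  have hcomm : Commute c σ := self_mem_cycle_factors_commute hmem
  have hσ_eq : c * rest = σ := by
    rw [hrest_def, ← mul_assoc, hcomm.eq, mul_assoc, mul_inv_cancel, mul_one]
  have hct : σ.cycleType = c.support.card ::ₘ rest.cycleType := by
    have hcf : rest.cycleFactorsFinset = σ.cycleFactorsFinset \ {c} :=
      cycleFactorsFinset_mul_inv_mem_eq_sdiff hmem
    rw [cycleType_def, cycleType_def, hcf]
    rw [Finset.sdiff_singleton_eq_erase, Finset.erase_val]
    conv_lhs => rw [← Multiset.cons_erase (Finset.mem_def.mp hmem)]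
    rw [Multiset.map_cons]
    rfl
  have hsumle := cyc_sum_le σ
  by_cases h2 : σ (σ x) = x
  · -- the cycle of x is exactly the swap
    have hcswap : c = swap x (σ x) := by
      have := hcyc.eq_swap_of_apply_apply_eq_self (x := x)
        (by rw [hcx]; exact h) (by rw [hcx, hcsx]; exact h2)
      rwa [hcx] at this
    have heq : swap x (σ x) * σ = rest := by
      have h1 : swap x (σ x) = c⁻¹ := by rw [hcswap, swap_inv]
      rw [h1, hcomm.inv_left.eq]
    have hcard : c.support.card = 2 := by
      rw [hcswap]; exact card_support_swap (Ne.symm h)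
    rw [heq, cyc_eq, cyc_eq, hct, hcard]
    rw [hct, hcard] at hsumle
    simp only [Multiset.card_cons, Multiset.sum_cons] at *
    omega
  · -- longer cycle: d = swap x (σ x) * c is still a cycle
    set d := swap x (σ x) * c with hd_def
    have hcx' : c x ≠ x := by rw [hcx]; exact h
    have hccx : c (c x) ≠ x := by rw [hcx, hcsx]; exact h2
    have hd_cyc : d.IsCycle := by
      have := hcyc.swap_mul hcx' hccx
      rwa [hcx] at this
    have hd_supp : d.support = c.support \ {x} := by
      have := support_swap_mul_eq c x hccx
      rw [hcx] at this
      exact this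
    have hxmem : x ∈ c.support := mem_support.mpr hcx'
    have hd_card : d.support.card = c.support.card - 1 := by
      rw [hd_supp, Finset.card_sdiff_of_subset (Finset.singleton_subset_iff.mpr hxmem),
        Finset.card_singleton]
    have hd_disj : Perm.Disjoint d rest := by
      intro y
      rcases hdisj y with hy | hy
      · exact Or.inr hy
      · left
        have : y ∉ d.support := by
          rw [hd_supp]
          simp [mem_support, hy]
        exact notMem_support.mp this
    have heq : swap x (σ x) * σ = d * rest := by
      rw [hd_def, mul_assoc, hσ_eq]
    have hct2 : (d * rest).cycleType = d.support.card ::ₘ rest.cycleType := by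
      rw [Equiv.Perm.Disjoint.cycleType_mul hd_disj, hd_cyc.cycleType]
      rfl
    have hc2 : 2 ≤ c.support.card := hcyc.two_le_card_support
    rw [heq, cyc_eq, cyc_eq, hct2, hct, hd_card]
    rw [hct] at hsumle
    simp only [Multiset.card_cons, Multiset.sum_cons] at *
    omega

section Congr
variable {γ : Type*} [Fintype γ] [DecidableEq γ]

lemma permCongr_eq_extendDomain (e : β ≃ γ) (σ : Perm β) :
    e.permCongr σ = σ.extendDomain (e.trans (Equiv.subtypeUnivEquiv (fun _ => trivial)).symm
      : β ≃ Subtype (fun _ : γ => True)) := by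
  ext c
  rw [extendDomain_apply_subtype _ _ trivial]
  simp

lemma cycleType_permCongr (e : β ≃ γ) (σ : Perm β) :
    (e.permCongr σ).cycleType = σ.cycleType := by
  rw [permCongr_eq_extendDomain, cycleType_extendDomain]

lemma cyc_permCongr (e : β ≃ γ) (σ : Perm β) : cyc (e.permCongr σ) = cyc σ := by
  unfold cyc
  rw [cycleType_permCongr]
  congr 1
  exact Nat.card_congr (Equiv.subtypeEquiv e (fun y => by
    simp [Equiv.permCongr_apply])).symm

end Congr

lemma optionCongr_eq_extendDomain (σ : Perm β) :
    σ.optionCongr = σ.extendDomain (Equiv.optionIsSomeEquiv β).symm := by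
  apply Equiv.ext
  intro o
  cases o with
  | none => rw [extendDomain_apply_not_subtype σ (Equiv.optionIsSomeEquiv β).symm (by simp)]; simp
  | some b =>
    rw [extendDomain_apply_subtype σ (Equiv.optionIsSomeEquiv β).symm (by simp : ((some b).isSome = true))]
    simp [Equiv.optionIsSomeEquiv]

lemma cycleType_optionCongr (σ : Perm β) : Equiv.Perm.cycleType σ.optionCongr = σ.cycleType := by
  rw [optionCongr_eq_extendDomain, cycleType_extendDomain]

lemma cyc_optionCongr (σ : Perm β) : cyc σ.optionCongr = cyc σ + 1 := by
  unfold cyc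
  rw [cycleType_optionCongr]
  have : Nat.card {o : Option β // σ.optionCongr o = o} = Nat.card {x : β // σ x = x} + 1 := by
    have e : {o : Option β // σ.optionCongr o = o} ≃ Option {x : β // σ x = x} := by
      refine ⟨fun o => match o with
        | ⟨none, _⟩ => none
        | ⟨some b, h⟩ => some ⟨b, by simpa using h⟩,
        fun o => match o with
        | none => ⟨none, rfl⟩
        | some x => ⟨some x.1, by simp [x.2]⟩, ?_, ?_⟩
      · rintro ⟨o, h⟩; cases o <;> simp
      · rintro (_ | x) <;> simp
    rw [Nat.card_congr e, Nat.card_eq_fintype_card, Nat.card_eq_fintype_card,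
      Fintype.card_option]
  omega

lemma cyc_decomposeOption_symm (o : Option β) (τ : Perm β) :
    cyc (Equiv.Perm.decomposeOption.symm (o, τ)) =
      (if o = none then cyc τ + 1 else cyc τ) := by
  rw [Equiv.Perm.decomposeOption_symm_apply]
  cases o with
  | none => simp [Equiv.swap_self, cyc_optionCongr, ← Equiv.Perm.one_def]
  | some p =>
    simp only [reduceCtorEq, if_false]
    set σ' : Perm (Option β) := swap none (some p) * τ.optionCongr with hσ'
    have h1 : σ' none = some p := by simp [hσ']
    have h2 : σ' none ≠ none := by rw [h1]; simp
    have h3 : swap none (σ' none) * σ' = τ.optionCongr := by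
      rw [h1, hσ', ← mul_assoc, swap_mul_self, one_mul]
    have := cyc_swap_mul σ' none h2
    rw [h3, cyc_optionCongr] at this
    omega

lemma cyc_decomposeFin_symm {n : ℕ} (p : Fin (n + 1)) (τ : Perm (Fin n)) :
    cyc (Equiv.Perm.decomposeFin.symm (p, τ)) = (if p = 0 then cyc τ + 1 else cyc τ) := by
  have : Equiv.Perm.decomposeFin.symm (p, τ) =
      ((finSuccEquiv n).permCongr).symm (Equiv.Perm.decomposeOption.symm (finSuccEquiv n p, τ)) := by
    rfl
  rw [this]
  rw [show ((finSuccEquiv n).permCongr).symm = (finSuccEquiv n).symm.permCongr from rfl]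
  rw [cyc_permCongr, cyc_decomposeOption_symm]
  have hiff : ((finSuccEquiv n) p = none) = (p = 0) := by
    apply propext
    cases p using Fin.cases with
    | zero => simp
    | succ i => simp [Fin.succ_ne_zero]
  simp only [hiff]


end Aux

/-- The Stirling cycle number `c(n,k)`: the number of permutations of an
`n`-element set whose decomposition into disjoint cycles (counting fixed
points as cycles) consists of exactly `k` cycles. -/
noncomputable def stirlingCycle (n k : ℕ) : ℕ :=
  Nat.card {σ : Equiv.Perm (Fin n) //
    σ.cycleType.card + Nat.card {x : Fin n // σ x = x} = k}

section Aux2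
open Equiv Equiv.Perm Finset

lemma stirling_eq_card (n k : ℕ) :
    stirlingCycle n k = Nat.card {σ : Perm (Fin n) // cyc σ = k} := rfl

lemma stirling_rec (n k : ℕ) :
    stirlingCycle (n + 1) (k + 1) = n * stirlingCycle n (k + 1) + stirlingCycle n k := by
  rw [stirling_eq_card, stirling_eq_card, stirling_eq_card]
  have e1 : {σ : Perm (Fin (n+1)) // cyc σ = k + 1} ≃
      {pt : Fin (n+1) × Perm (Fin n) // cyc (Equiv.Perm.decomposeFin.symm pt) = k + 1} :=
    Equiv.subtypeEquiv Equiv.Perm.decomposeFin (fun σ => by rw [Equiv.symm_apply_apply])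
  have e2 : {pt : Fin (n+1) × Perm (Fin n) // cyc (Equiv.Perm.decomposeFin.symm pt) = k + 1} ≃
      Σ p : Fin (n+1), {τ : Perm (Fin n) // cyc (Equiv.Perm.decomposeFin.symm (p, τ)) = k + 1} :=
    Equiv.subtypeProdEquivSigmaSubtype (fun p τ => cyc (Equiv.Perm.decomposeFin.symm (p, τ)) = k + 1)
  rw [Nat.card_congr (e1.trans e2), Nat.card_eq_fintype_card, Fintype.card_sigma,
    Fin.sum_univ_succ]
  have h0 : Fintype.card {τ : Perm (Fin n) //
      cyc (Equiv.Perm.decomposeFin.symm ((0 : Fin (n+1)), τ)) = k + 1} =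
      Nat.card {τ : Perm (Fin n) // cyc τ = k} := by
    rw [Nat.card_eq_fintype_card]
    apply Fintype.card_congr
    apply Equiv.subtypeEquivRight
    intro τ
    rw [cyc_decomposeFin_symm, if_pos rfl]
    omega
  have hs : ∀ i : Fin n, Fintype.card {τ : Perm (Fin n) //
      cyc (Equiv.Perm.decomposeFin.symm (i.succ, τ)) = k + 1} =
      Nat.card {τ : Perm (Fin n) // cyc τ = k + 1} := by
    intro i
    rw [Nat.card_eq_fintype_card]
    apply Fintype.card_congr
    apply Equiv.subtypeEquivRight
    intro τ
    rw [cyc_decomposeFin_symm, if_neg (Fin.succ_ne_zero i)]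
  rw [h0]
  simp only [hs]
  rw [Finset.sum_const, Finset.card_univ, Fintype.card_fin, smul_eq_mul]
  omega

lemma cyc_fin_zero (σ : Perm (Fin 0)) : cyc σ = 0 := by
  unfold cyc
  rw [Subsingleton.elim σ 1, cycleType_one]
  simp [Nat.card_of_isEmpty]

lemma stirling_zero_zero : stirlingCycle 0 0 = 1 := by
  rw [stirling_eq_card]
  have : ∀ σ : Perm (Fin 0), cyc σ = 0 := cyc_fin_zero
  have hne : Nonempty {σ : Perm (Fin 0) // cyc σ = 0} := ⟨⟨1, this 1⟩⟩
  exact Nat.card_unique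

lemma stirling_zero_succ (k : ℕ) : stirlingCycle 0 (k + 1) = 0 := by
  rw [stirling_eq_card]
  have : IsEmpty {σ : Perm (Fin 0) // cyc σ = k + 1} :=
    ⟨fun ⟨σ, h⟩ => by rw [cyc_fin_zero σ] at h; exact Nat.succ_ne_zero k h.symm⟩
  exact Nat.card_of_isEmpty

lemma stirling_succ_zero (n : ℕ) : stirlingCycle (n + 1) 0 = 0 := by
  rw [stirling_eq_card]
  have : IsEmpty {σ : Perm (Fin (n + 1)) // cyc σ = 0} := by
    constructor
    rintro ⟨σ, h⟩
    unfold cyc at h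
    have h1 : Multiset.card σ.cycleType = 0 := by omega
    have h2 : σ = 1 := card_cycleType_eq_zero.mp h1
    subst h2
    have : Nat.card {x : Fin (n + 1) // (1 : Perm (Fin (n+1))) x = x} = n + 1 := by
      rw [Nat.card_congr (Equiv.subtypeUnivEquiv (fun x => by simp)),
        Nat.card_eq_fintype_card, Fintype.card_fin]
    omega
  exact Nat.card_of_isEmpty

def sc : ℕ → ℕ → ℕ
  | 0, 0 => 1
  | 0, _ + 1 => 0
  | _ + 1, 0 => 0
  | n + 1, k + 1 => n * sc n (k + 1) + sc n k

lemma stirling_eq_sc : ∀ n k, stirlingCycle n k = sc n k := by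
  intro n
  induction n with
  | zero => intro k; cases k with
    | zero => exact stirling_zero_zero
    | succ k => exact stirling_zero_succ k
  | succ n ih => intro k; cases k with
    | zero => exact stirling_succ_zero n
    | succ k => rw [stirling_rec, ih, ih]; rfl

lemma sc_zero_right : ∀ n, n * sc n 0 = 0
  | 0 => rfl
  | n + 1 => by rw [show sc (n+1) 0 = 0 from rfl, mul_zero]

lemma sc_gt : ∀ n k, n < k → sc n k = 0 := by
  intro n
  induction n with
  | zero => intro k hk; cases k with
    | zero => omega
    | succ k => rfl
  | succ n ih =>
    intro k hk
    cases k with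
    | zero => omega
    | succ k =>
      show n * sc n (k + 1) + sc n k = 0
      rw [ih (k+1) (by omega), ih k (by omega), mul_zero]

lemma sc_sum : ∀ n r, ∑ j ∈ range (n + 1), j.choose r * sc n j = sc (n + 1) (r + 1) := by
  intro n
  induction n with
  | zero =>
    intro r
    cases r with
    | zero => simp [sc]
    | succ r => simp [sc, Nat.choose_eq_zero_of_lt (Nat.succ_pos r)]
  | succ n ih =>
    intro r
    have key : ∑ j ∈ range (n + 2), j.choose r * sc (n + 1) j
        = ∑ j ∈ range (n + 1), (j + 1).choose r * (n * sc n (j + 1) + sc n j) := by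
      rw [Finset.sum_range_succ' (fun j => j.choose r * sc (n + 1) j) (n + 1)]
      rw [show sc (n + 1) 0 = 0 from rfl, mul_zero, add_zero]
      rfl
    have hsplit : ∑ j ∈ range (n + 1), (j + 1).choose r * (n * sc n (j + 1) + sc n j)
        = n * (∑ j ∈ range (n + 1), (j + 1).choose r * sc n (j + 1))
          + ∑ j ∈ range (n + 1), (j + 1).choose r * sc n j := by
      rw [Finset.mul_sum, ← Finset.sum_add_distrib]
      congr 1; funext j; ring
    have hA : (∑ j ∈ range (n + 1), (j + 1).choose r * sc n (j + 1))
        + Nat.choose 0 r * sc n 0 = sc (n + 1) (r + 1) := by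
      have h1 := Finset.sum_range_succ' (fun j => j.choose r * sc n j) (n + 1)
      have h2 : ∑ j ∈ range (n + 2), j.choose r * sc n j = sc (n + 1) (r + 1) := by
        rw [Finset.sum_range_succ, sc_gt n (n + 1) (by omega), mul_zero, add_zero]
        exact ih r
      rw [h2] at h1
      exact h1.symm
    rw [key, hsplit]
    set A := ∑ j ∈ range (n + 1), (j + 1).choose r * sc n (j + 1) with hA_def
    cases r with
    | zero =>
      have hS2 : ∑ j ∈ range (n + 1), (j + 1).choose 0 * sc n j = sc (n + 1) 1 := by
        simp only [Nat.choose_zero_right, one_mul]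
        have := ih 0
        simpa using this
      rw [hS2]
      simp only [Nat.choose_zero_right, one_mul] at hA
      have e1 : sc (n + 1 + 1) (0 + 1) = (n + 1) * sc (n + 1) 1 + sc (n + 1) 0 := rfl
      have e2 : sc (n + 1) 0 = 0 := rfl
      have e3 : n * sc (n + 1) 1 = n * (A + sc n 0) := by rw [hA]
      have e4 := sc_zero_right n
      rw [e1, e2, add_zero, add_mul, one_mul, e3, Nat.mul_add, e4, add_zero]
    | succ r' =>
      have hA' : A = sc (n + 1) (r' + 1 + 1) := by
        rw [Nat.choose_eq_zero_of_lt (Nat.succ_pos r'), zero_mul, add_zero] at hA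
        exact hA
      have hS2 : ∑ j ∈ range (n + 1), (j + 1).choose (r' + 1) * sc n j
          = sc (n + 1) (r' + 1) + sc (n + 1) (r' + 1 + 1) := by
        calc ∑ j ∈ range (n + 1), (j + 1).choose (r' + 1) * sc n j
            = ∑ j ∈ range (n + 1), (j.choose r' * sc n j + j.choose (r' + 1) * sc n j) := by
              apply Finset.sum_congr rfl
              intro j _
              rw [Nat.choose_succ_succ j r', Nat.add_mul]
          _ = sc (n + 1) (r' + 1) + sc (n + 1) (r' + 1 + 1) := by
              rw [Finset.sum_add_distrib, ih r', ih (r' + 1)]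
      rw [hS2, hA']
      have e1 : sc (n + 1 + 1) (r' + 1 + 1) =
          (n + 1) * sc (n + 1) (r' + 1 + 1) + sc (n + 1) (r' + 1) := rfl
      rw [e1]
      ring

lemma sc_succ_succ (n k : ℕ) : sc (n + 1) (k + 1) = n * sc n (k + 1) + sc n k := rfl

theorem stmt_16 (n m : ℕ) (hm : 1 ≤ m) (hmn : m ≤ n) :
    m * stirlingCycle n (n - m) =
      ∑ k ∈ Finset.range m, (n - k).choose (m + 1 - k) * stirlingCycle n (n - k) := by
  simp only [stirling_eq_sc]
  rcases eq_or_lt_of_le hmn with heq | hlt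
  · -- m = n
    subst heq
    have hL : m * sc m (m - m) = 0 := by
      rw [Nat.sub_self]
      exact sc_zero_right m
    rw [hL]
    symm
    apply Finset.sum_eq_zero
    intro k hk
    rw [Finset.mem_range] at hk
    rw [Nat.choose_eq_zero_of_lt (by omega), zero_mul]
  · -- m < n
    obtain ⟨t, rfl⟩ : ∃ t, n = m + t + 1 := ⟨n - m - 1, by omega⟩
    set n := m + t + 1 with hn
    have hnm : n - m = t + 1 := by omega
    rw [hnm]
    -- main identity from sc_sum
    have hmain := sc_sum n t
    have hsplit : ∑ j ∈ range (n + 1), j.choose t * sc n j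
        = (∑ j ∈ range (t + 2), j.choose t * sc n j)
          + ∑ j ∈ Finset.Ico (t + 2) (n + 1), j.choose t * sc n j := by
      rw [Finset.range_eq_Ico, ← Finset.sum_Ico_consecutive _ (by omega : 0 ≤ t + 2)
        (by omega : t + 2 ≤ n + 1), Finset.range_eq_Ico]
    have hlow : ∑ j ∈ range (t + 2), j.choose t * sc n j
        = sc n t + (t + 1) * sc n (t + 1) := by
      rw [Finset.sum_range_succ, Finset.sum_range_succ]
      rw [Nat.choose_self, Nat.choose_succ_self_right, one_mul]
      rw [Finset.sum_eq_zero (fun j hj => by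
        rw [Finset.mem_range] at hj
        rw [Nat.choose_eq_zero_of_lt hj, zero_mul]), zero_add]
    set T := ∑ j ∈ Finset.Ico (t + 2) (n + 1), j.choose t * sc n j with hT
    have heq1 : sc n t + (t + 1) * sc n (t + 1) + T = n * sc n (t + 1) + sc n t := by
      rw [← hlow, ← hsplit, hmain, hn, sc_succ_succ]
    -- conclude m * sc n (t+1) = T
    have hkey : m * sc n (t + 1) = T := by
      have hexp : n * sc n (t + 1) = m * sc n (t + 1) + (t + 1) * sc n (t + 1) := by
        rw [hn]
        ring
      rw [hexp] at heq1
      set a := sc n (t + 1)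
      set b := sc n t
      set X := (t + 1) * a
      set Y := m * a
      omega
    rw [hkey, hT]
    -- reindex
    refine Finset.sum_nbij' (fun k => n - k) (fun j => n - j) ?_ ?_ ?_ ?_ ?_ <;>
      intro x hx <;>
      simp only [Finset.mem_range, Finset.mem_Ico] at hx ⊢ <;>
      try omega
    have h2 : n - (n - x) = x := by omega
    have h1 : m + 1 - (n - x) = x - t := by omega
    rw [h2, h1]
    exact congrArg (· * sc n x) (Nat.choose_symm (n := x) (k := t) (by omega : t ≤ x)).symm

end Aux2
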